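/- For the CDUFL instance with two co-located facilities i (uncapacitated, opening cost f > 0) and i′ (capacity u, opening cost 0) and u+1 co-located clients (all distances 0), every integral feasible solution has cost at least f, while the LP relaxation admits a feasible fractional solution of cost f/(u+1). Hence the integrality gap of the natural LP is at least u+1. -/

import Mathlib

/-- CDUFL integrality-gap instance: one uncapacitated facility with opening cost `f > 0`,
one capacitated facility with capacity `u ≥ 1` and zero opening cost, `u+1` co-located
clients (all distances 0). Every integral feasible solution has cost at least `f`, while
the natural LP admits a feasible fractional solution of cost `f/(u+1)`; hence the
integrality gap is at least `u+1`. -/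
theorem stmt9 (f : ℝ) (hf : 0 < f) (u : ℕ) (hu : 1 ≤ u) :
    -- every integral feasible solution has cost at least f
    (∀ (y : ℝ) (x x' : Fin (u+1) → ℝ),
      (y = 0 ∨ y = 1) →
      (∀ j, 0 ≤ x j) → (∀ j, 0 ≤ x' j) →
      (∀ j, 1 ≤ x j + x' j) →
      (∀ j, x j ≤ y) →
      (∑ j, x' j ≤ (u : ℝ)) →
      f ≤ f * y)
    ∧
    -- there is a feasible fractional LP solution of cost f/(u+1)
    (∃ (y : ℝ) (x x' : Fin (u+1) → ℝ),
      0 ≤ y ∧ y ≤ 1 ∧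
      (∀ j, 0 ≤ x j) ∧ (∀ j, 0 ≤ x' j) ∧
      (∀ j, 1 ≤ x j + x' j) ∧
      (∀ j, x j ≤ y) ∧
      (∑ j, x' j ≤ (u : ℝ)) ∧
      f * y = f / (u + 1))
    ∧ f / (f / (u + 1)) = (u : ℝ) + 1 := by
  have hup : (0:ℝ) < (u:ℝ) + 1 := by positivity
  refine ⟨?_, ?_, ?_⟩
  · rintro y x x' (rfl | rfl) hx hx' hcov hxy hcap
    · exfalso
      have h1 : ∀ j, (1:ℝ) ≤ x' j := fun j => by
        have := hcov j; have := hxy j; linarith [hx j]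
      have : ((u:ℝ) + 1) ≤ ∑ j, x' j := by
        calc ((u:ℝ)+1) = ∑ _j : Fin (u+1), (1:ℝ) := by
              simp [Finset.sum_const]
          _ ≤ ∑ j, x' j := Finset.sum_le_sum fun j _ => h1 j
      linarith
    · linarith
  · refine ⟨1/((u:ℝ)+1), fun _ => 1/((u:ℝ)+1), fun _ => (u:ℝ)/((u:ℝ)+1),
      by positivity, ?_, fun _ => by positivity, fun _ => by positivity,
      fun _ => by rw [← add_div, le_div_iff₀ hup]; linarith, fun _ => le_refl _, ?_, ?_⟩
    · rw [div_le_one hup]; linarith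
    · rw [Finset.sum_const]
      simp only [Finset.card_univ, Fintype.card_fin, nsmul_eq_mul]
      push_cast
      field_simp
      exact le_refl _
    · rw [mul_one_div]
  · rw [div_div_eq_mul_div, mul_comm, mul_div_assoc, div_self hf.ne', mul_one]
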